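/- Let C be a field and let H be a subgroup of GL_n(C), equipped with the subspace topology induced by the Zariski topology on M_n(C). Suppose that every commutator g h g^{-1} h^{-1} of elements g, h ∈ H is a scalar matrix. Then every element of the connected component of the identity of H commutes with every element of H; that is, the identity component of H is contained in the center of H. -/

import Mathlib

/-- The Zariski topology on `n × n` matrices over a commutative ring `C`. -/
def matrixZariskiTopology (n : ℕ) (C : Type*) [CommRing C] :
    TopologicalSpace (Matrix (Fin n) (Fin n) C) :=
  TopologicalSpace.generateFrom
    {U | ∃ f : MvPolynomial (Fin n × Fin n) C,
      U = {A | MvPolynomial.eval (fun p => A p.1 p.2) f ≠ 0}}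

/-- For fixed `M` and `α`, the set `{A | A * M = α • (M * A)}` is Zariski-closed. -/
lemma zariski_closed_commRel {C : Type*} [Field C] {n : ℕ} (M : Matrix (Fin n) (Fin n) C)
    (α : C) :
    @IsClosed _ (matrixZariskiTopology n C)
      {A : Matrix (Fin n) (Fin n) C | A * M = α • (M * A)} := by
  letI := matrixZariskiTopology n C
  have heq : {A : Matrix (Fin n) (Fin n) C | A * M = α • (M * A)} =
      ⋂ p : Fin n × Fin n, {A : Matrix (Fin n) (Fin n) C |
        MvPolynomial.eval (fun q => A q.1 q.2)
          ((∑ k, MvPolynomial.X (p.1, k) * MvPolynomial.C (M k p.2)) -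
            MvPolynomial.C α * ∑ k, MvPolynomial.C (M p.1 k) * MvPolynomial.X (k, p.2)) = 0} := by
    ext A
    simp only [Set.mem_iInter, Set.mem_setOf_eq, map_sub, map_mul, map_sum,
      MvPolynomial.eval_C, MvPolynomial.eval_X, sub_eq_zero, ← Matrix.ext_iff]
    constructor
    · intro h p
      simpa [Matrix.mul_apply, Matrix.smul_apply, smul_eq_mul, Finset.mul_sum] using h p.1 p.2
    · intro h i j
      simpa [Matrix.mul_apply, Matrix.smul_apply, smul_eq_mul, Finset.mul_sum] using h (i, j)
  rw [heq]
  refine isClosed_iInter fun p => ?_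
  rw [← isOpen_compl_iff]
  have h2 : {A : Matrix (Fin n) (Fin n) C |
      MvPolynomial.eval (fun q => A q.1 q.2)
        ((∑ k, MvPolynomial.X (p.1, k) * MvPolynomial.C (M k p.2)) -
          MvPolynomial.C α * ∑ k, MvPolynomial.C (M p.1 k) * MvPolynomial.X (k, p.2)) = 0}ᶜ =
      {A : Matrix (Fin n) (Fin n) C |
      MvPolynomial.eval (fun q => A q.1 q.2)
        ((∑ k, MvPolynomial.X (p.1, k) * MvPolynomial.C (M k p.2)) -
          MvPolynomial.C α * ∑ k, MvPolynomial.C (M p.1 k) * MvPolynomial.X (k, p.2)) ≠ 0} := by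
    ext A; simp
  rw [h2]
  exact TopologicalSpace.GenerateOpen.basic _ ⟨_, rfl⟩

/-- If the commutator of `u` and `h` is the scalar `α`, then `u * h = α • (h * u)` and
`α` is an `n`-th root of unity. -/
lemma commutator_scalar_rel {C : Type*} [Field C] {n : ℕ}
    (u h : (Matrix (Fin n) (Fin n) C)ˣ) (α : Cˣ)
    (hα : ((u * h * u⁻¹ * h⁻¹ : (Matrix (Fin n) (Fin n) C)ˣ) : Matrix (Fin n) (Fin n) C) =
        (α : C) • (1 : Matrix (Fin n) (Fin n) C)) :
    (α : C) ^ n = 1 ∧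
      (u : Matrix (Fin n) (Fin n) C) * h = (α : C) • ((h : Matrix (Fin n) (Fin n) C) * u) := by
  have h1 : (u * h : (Matrix (Fin n) (Fin n) C)ˣ) = (u * h * u⁻¹ * h⁻¹) * (h * u) := by group
  have h2 : (u : Matrix (Fin n) (Fin n) C) * h
      = (α : C) • ((h : Matrix (Fin n) (Fin n) C) * u) := by
    have := congrArg (Units.val) h1
    rw [Units.val_mul, Units.val_mul, hα, Units.val_mul, smul_mul_assoc, one_mul] at this
    exact this
  refine ⟨?_, h2⟩
  have hdet := congrArg Matrix.det h2
  rw [Matrix.det_mul, Matrix.det_smul, Matrix.det_mul, Fintype.card_fin] at hdet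
  have hu : Matrix.det (u : Matrix (Fin n) (Fin n) C) ≠ 0 :=
    IsUnit.ne_zero ((Matrix.isUnit_iff_isUnit_det _).mp u.isUnit)
  have hh : Matrix.det (h : Matrix (Fin n) (Fin n) C) ≠ 0 :=
    IsUnit.ne_zero ((Matrix.isUnit_iff_isUnit_det _).mp h.isUnit)
  have hkey : (α : C) ^ n * (Matrix.det (h : Matrix (Fin n) (Fin n) C)
      * Matrix.det (u : Matrix (Fin n) (Fin n) C))
      = Matrix.det (h : Matrix (Fin n) (Fin n) C)
        * Matrix.det (u : Matrix (Fin n) (Fin n) C) := by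
    rw [← hdet]; ring
  exact mul_right_cancel₀ (mul_ne_zero hh hu) (by rw [hkey, one_mul])

/-- If every commutator of elements of a subgroup `H ≤ GL_n(C)` is a scalar matrix, then
every element of the identity component of `H` (for the subspace topology induced by the
Zariski topology on `M_n(C)`) commutes with every element of `H`. -/
theorem identityComponent_central_of_commutator_scalar {C : Type*} [Field C] (n : ℕ)
    (H : Subgroup (Matrix (Fin n) (Fin n) C)ˣ)
    (hcomm : ∀ g ∈ H, ∀ h ∈ H, ∃ α : Cˣ,
      ((g * h * g⁻¹ * h⁻¹ : (Matrix (Fin n) (Fin n) C)ˣ) : Matrix (Fin n) (Fin n) C) =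
        (α : C) • (1 : Matrix (Fin n) (Fin n) C)) :
    ∀ g ∈ @connectedComponentIn _ (matrixZariskiTopology n C)
        {M : Matrix (Fin n) (Fin n) C | ∃ u ∈ H, (u : Matrix (Fin n) (Fin n) C) = M}
        (1 : Matrix (Fin n) (Fin n) C),
      ∀ M ∈ {M : Matrix (Fin n) (Fin n) C | ∃ u ∈ H, (u : Matrix (Fin n) (Fin n) C) = M},
        g * M = M * g := by
  classical
  intro g hg M hM
  rcases Nat.eq_zero_or_pos n with rfl | hn
  · ext i j; exact i.elim0
  haveI : Nonempty (Fin n) := ⟨⟨0, hn⟩⟩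
  obtain ⟨hu, hhuH, rfl⟩ := hM
  letI := matrixZariskiTopology n C
  set S : Set (Matrix (Fin n) (Fin n) C) :=
    {M | ∃ u ∈ H, (u : Matrix (Fin n) (Fin n) C) = M} with hSdef
  -- every element of S satisfies the relation for some n-th root of unity
  have key : ∀ A ∈ S, ∃ α : C, α ^ n = 1 ∧
      A * (hu : Matrix (Fin n) (Fin n) C)
        = α • ((hu : Matrix (Fin n) (Fin n) C) * A) := by
    rintro A ⟨u, huH, rfl⟩
    obtain ⟨α, hα⟩ := hcomm u huH hu hhuH
    obtain ⟨h1, h2⟩ := commutator_scalar_rel u hu α hα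
    exact ⟨α, h1, h2⟩
  -- disjointness: the root is unique (only 1 gives commutation)
  have disj : ∀ A ∈ S, ∀ α : C,
      A * (hu : Matrix (Fin n) (Fin n) C) = α • ((hu : Matrix (Fin n) (Fin n) C) * A) →
      A * (hu : Matrix (Fin n) (Fin n) C) = (hu : Matrix (Fin n) (Fin n) C) * A → α = 1 := by
    rintro A ⟨u, huH, rfl⟩ α h1 h2
    by_contra hne
    have h3 : (1 - α) • ((hu : Matrix (Fin n) (Fin n) C) * u) = 0 := by
      rw [sub_smul, one_smul, ← h1, h2, sub_self]
    rcases smul_eq_zero.mp h3 with h | h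
    · exact hne (sub_eq_zero.mp h).symm
    · have h4 : ((hu * u : (Matrix (Fin n) (Fin n) C)ˣ) : Matrix (Fin n) (Fin n) C) = 0 := by
        rw [Units.val_mul]; exact h
      exact (hu * u).isUnit.ne_zero h4
  -- finiteness of n-th roots of unity
  have hroots : {β : C | β ^ n = 1}.Finite := by
    refine Set.Finite.subset (Polynomial.nthRoots n (1 : C)).toFinset.finite_toSet ?_
    intro β hβ
    simp only [Multiset.mem_toFinset, Finset.mem_coe]
    exact (Polynomial.mem_nthRoots hn).mpr hβ
  have h1S : (1 : Matrix (Fin n) (Fin n) C) ∈ S := ⟨1, H.one_mem, Units.val_one⟩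
  rw [connectedComponentIn_eq_image h1S] at hg
  obtain ⟨a, haC, rfl⟩ := hg
  -- the clopen set of elements commuting with hu
  set T : Set S := Subtype.val ⁻¹'
    {A : Matrix (Fin n) (Fin n) C |
      A * (hu : Matrix (Fin n) (Fin n) C) = (hu : Matrix (Fin n) (Fin n) C) * A} with hTdef
  have hTclosed : IsClosed T := by
    have hone : {A : Matrix (Fin n) (Fin n) C |
        A * (hu : Matrix (Fin n) (Fin n) C) = (hu : Matrix (Fin n) (Fin n) C) * A} =
        {A : Matrix (Fin n) (Fin n) C | A * (hu : Matrix (Fin n) (Fin n) C)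
          = (1 : C) • ((hu : Matrix (Fin n) (Fin n) C) * A)} := by
      simp [one_smul]
    rw [hTdef, hone]
    exact (zariski_closed_commRel (hu : Matrix (Fin n) (Fin n) C) 1).preimage
      continuous_subtype_val
  have hcompl : Tᶜ = Subtype.val ⁻¹'
      (⋃ α ∈ ({β : C | β ^ n = 1} \ {1}),
        {A : Matrix (Fin n) (Fin n) C |
          A * (hu : Matrix (Fin n) (Fin n) C) = α • ((hu : Matrix (Fin n) (Fin n) C) * A)}) := by
    ext b
    simp only [hTdef, Set.mem_compl_iff, Set.mem_preimage, Set.mem_iUnion, Set.mem_setOf_eq,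
      Set.mem_diff, Set.mem_singleton_iff, exists_prop]
    constructor
    · intro hnb
      obtain ⟨α, hα1, hα2⟩ := key b b.2
      exact ⟨α, ⟨hα1, fun hc => hnb (by rw [hα2, hc, one_smul])⟩, hα2⟩
    · rintro ⟨α, ⟨hα1, hαne⟩, hα2⟩ hcontra
      exact hαne (disj b b.2 α hα2 hcontra)
  have hTopen : IsOpen T := by
    rw [← isClosed_compl_iff, hcompl]
    refine IsClosed.preimage continuous_subtype_val ?_
    exact Set.Finite.isClosed_biUnion (hroots.diff (t := {1}))
      (fun α _ => zariski_closed_commRel (hu : Matrix (Fin n) (Fin n) C) α)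
  have hmem1 : (⟨1, h1S⟩ : S) ∈ T := by
    simp [hTdef]
  have hsub := IsClopen.connectedComponent_subset ⟨hTclosed, hTopen⟩ hmem1
  exact hsub haC
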